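/- Let G be a graph with girth at least γ, and let α ≥ 1, δ = ⌊(γ-1)/(α+1)⌋. Then every path P of length δ between two vertices u and v is the unique shortest path between u and v; moreover, any other path P' between u and v satisfies |P'| > α·δ. -/

import Mathlib

open SimpleGraph Walk

section Aux

variable {V : Type*} {G : SimpleGraph V}

private lemma aux_takeUntil_cons [DecidableEq V] {u b v x : V} (h : G.Adj u b)
    (p : G.Walk b v) (hx : x ∈ p.support) (hxu : x ≠ u) :
    (Walk.cons h p).takeUntil x (by simp [hx]) = Walk.cons h (p.takeUntil x hx) := by
  simp only [Walk.takeUntil]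
  rw [dif_neg (fun h' => hxu h'.symm)]

/-- First vertex of `r` lying in `L` (exists since the endpoint does). -/
private lemma aux_first_meet [DecidableEq V] {L : List V} :
    ∀ {a v : V} (r : G.Walk a v), v ∈ L →
    ∃ (x : V) (hx : x ∈ r.support), x ∈ L ∧
      ∀ y ∈ (r.takeUntil x hx).support, y ∈ L → y = x := by
  intro a v r
  induction r with
  | @nil w =>
    intro hv
    refine ⟨w, by simp, hv, fun y hy _ => ?_⟩
    have := Walk.support_takeUntil_subset _ (by simp : w ∈ (Walk.nil : G.Walk w w).support) hy
    simpa using this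
  | @cons a b v h p ih =>
    intro hv
    by_cases hA : a ∈ L
    · refine ⟨a, by simp, hA, fun y hy _ => ?_⟩
      have heq : (Walk.cons h p).takeUntil a (by simp) = Walk.nil := by
        simp [Walk.takeUntil]
      rw [heq] at hy
      simpa using hy
    · obtain ⟨x, hx, hxL, hmin⟩ := ih hv
      have hxa : x ≠ a := fun hxa => hA (hxa ▸ hxL)
      refine ⟨x, by simp [hx], hxL, fun y hy hyL => ?_⟩
      rw [aux_takeUntil_cons h p hx hxa, Walk.support_cons, List.mem_cons] at hy
      rcases hy with rfl | hy'
      · exact absurd hyL hA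
      · exact hmin y hy' hyL

/-- A path between `u` and `x` containing the edge `s(u,x)` has length one. -/
private lemma aux_length_one {u x : V} (p : G.Walk u x) (hp : p.IsPath)
    (he : s(u, x) ∈ p.edges) : p.length = 1 := by
  cases p with
  | nil => simp at he
  | @cons _ c _ h' p' =>
    rw [Walk.edges_cons, List.mem_cons] at he
    rw [Walk.cons_isPath_iff] at hp
    rcases he with he | he
    · rw [Sym2.eq_iff] at he
      rcases he with ⟨-, rfl⟩ | ⟨rfl, rfl⟩
      · have : p' = Walk.nil := (Walk.isPath_iff_eq_nil (p := p')).mp hp.1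
        subst this; simp
      · exact absurd rfl h'.ne
    · exact absurd (Walk.fst_mem_support_of_mem_edges p' he) hp.2

/-- Two walks of length one between the same endpoints are equal. -/
private lemma aux_eq_of_length_one {u x : V} (p q : G.Walk u x)
    (hp1 : p.length = 1) (hq1 : q.length = 1) : p = q := by
  cases p with
  | nil => simp at hp1
  | @cons _ b _ h p' =>
    cases q with
    | nil => simp at hq1
    | @cons _ c _ h' q' =>
      rw [Walk.length_cons] at hp1 hq1
      have hb : b = x := Walk.eq_of_length_eq_zero (p := p') (by omega)
      have hc : c = x := Walk.eq_of_length_eq_zero (p := q') (by omega)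
      subst hb; subst hc
      have hpn : p' = Walk.nil := Walk.nil_iff_eq_nil.mp (Walk.length_eq_zero_iff.mp (by omega))
      have hqn : q' = Walk.nil := Walk.nil_iff_eq_nil.mp (Walk.length_eq_zero_iff.mp (by omega))
      subst hpn; subst hqn
      rfl

/-- Two distinct internally disjoint paths between `u` and `x` form a cycle. -/
private lemma aux_cycle_of_disjoint {u x : V} (p q : G.Walk u x)
    (hp : p.IsPath) (hq : q.IsPath) (hne : p ≠ q) (hux : u ≠ x)
    (hmeet : ∀ y, y ∈ p.support → y ∈ q.support → y = u ∨ y = x) :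
    (p.append q.reverse).IsCycle := by
  have hedge : ∀ e, e ∈ p.edges → e ∈ q.edges → False := by
    intro e hep heq
    induction e using Sym2.ind with
    | _ y z =>
      have hyz : y ≠ z := G.ne_of_adj (p.edges_subset_edgeSet hep)
      have hy : y = u ∨ y = x :=
        hmeet y (Walk.fst_mem_support_of_mem_edges p hep)
          (Walk.fst_mem_support_of_mem_edges q heq)
      have hz : z = u ∨ z = x :=
        hmeet z (Walk.snd_mem_support_of_mem_edges p hep)
          (Walk.snd_mem_support_of_mem_edges q heq)
      have hex : s(y, z) = s(u, x) := by
        rcases hy with rfl | rfl <;> rcases hz with rfl | rfl <;>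
          first | exact absurd rfl hyz | simp [Sym2.eq_swap]
      rw [hex] at hep heq
      exact hne (aux_eq_of_length_one p q (aux_length_one p hp hep)
        (aux_length_one q hq heq))
  rw [Walk.isCycle_def]
  refine ⟨?_, ?_, ?_⟩
  · rw [Walk.isTrail_def, Walk.edges_append, Walk.edges_reverse, List.nodup_append]
    refine ⟨hp.isTrail.edges_nodup, List.nodup_reverse.mpr hq.isTrail.edges_nodup, ?_⟩
    intro e hep e' heq' hee
    subst hee
    exact hedge e hep (List.mem_reverse.mp heq')
  · intro hnil
    have h0 : p.length + q.reverse.length = 0 := by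
      have := congrArg Walk.length hnil
      rwa [Walk.length_append] at this
    exact hux (Walk.eq_of_length_eq_zero (p := p) (by omega))
  · rw [Walk.tail_support_append, List.nodup_append]
    have hpn : p.support.Nodup := hp.support_nodup
    have hqn : q.reverse.support.Nodup := hq.reverse.support_nodup
    refine ⟨hpn.tail, hqn.tail, ?_⟩
    intro y hyp y' hyq hyy
    subst hyy
    have hyp' : y ∈ p.support := List.mem_of_mem_tail hyp
    have hyq' : y ∈ q.support := by
      have := List.mem_of_mem_tail hyq
      rwa [Walk.support_reverse, List.mem_reverse] at this
    rcases hmeet y hyp' hyq' with hy | hy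
    · have hcons := p.support_eq_cons
      rw [hcons, List.nodup_cons] at hpn
      exact hpn.1 (hy ▸ hyp)
    · have hcons := q.reverse.support_eq_cons
      rw [hcons, List.nodup_cons] at hqn
      exact hqn.1 (hy ▸ hyq)

/-- Two distinct paths between the same endpoints yield a cycle of length at most
the sum of their lengths. -/
private lemma aux_exists_cycle [DecidableEq V] :
    ∀ (n : ℕ) {u v : V} (p q : G.Walk u v), p.IsPath → q.IsPath → p ≠ q →
      p.length + q.length ≤ n →
      ∃ (a : V) (c : G.Walk a a), c.IsCycle ∧ c.length ≤ p.length + q.length := by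
  intro n
  induction n with
  | zero =>
    intro u v p q hp hq hne hlen
    have hp0 : p.length = 0 := by omega
    have hq0 : q.length = 0 := by omega
    have huv := Walk.eq_of_length_eq_zero hp0
    subst huv
    rw [Walk.length_eq_zero_iff] at hp0 hq0
    exact absurd ((Walk.nil_iff_eq_nil.mp hp0).trans (Walk.nil_iff_eq_nil.mp hq0).symm) hne
  | succ n ih =>
    intro u v p q hp hq hne hlen
    cases p with
    | nil =>
      have := (Walk.isPath_iff_eq_nil (p := q)).mp hq
      exact absurd this.symm hne
    | @cons _ b _ h p' =>
      obtain ⟨x, hx, hxq, hmin⟩ := aux_first_meet p' q.end_mem_support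
      have hxP : x ∈ (Walk.cons h p').support := by simp [hx]
      have hup' : u ∉ p'.support := ((Walk.cons_isPath_iff h p').mp hp).2
      have hxu : x ≠ u := fun hxu => hup' (hxu ▸ hx)
      set P : G.Walk u v := Walk.cons h p' with hP
      have hp1eq : P.takeUntil x hxP = Walk.cons h (p'.takeUntil x hx) :=
        aux_takeUntil_cons h p' hx hxu
      have hspec : (P.takeUntil x hxP).append (P.dropUntil x hxP) = P :=
        Walk.take_spec P hxP
      have hlensplit : (P.takeUntil x hxP).length + (P.dropUntil x hxP).length = P.length := by
        have := congrArg Walk.length hspec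
        rwa [Walk.length_append] at this
      have hlen1 : 1 ≤ (P.takeUntil x hxP).length := by
        rcases Nat.eq_zero_or_pos (P.takeUntil x hxP).length with h0 | h0
        · exact absurd (Walk.eq_of_length_eq_zero h0) (fun h' => hxu h'.symm)
        · exact h0
      have h4 : (q.takeUntil x hxq).length + (q.dropUntil x hxq).length = q.length := by
        have := congrArg Walk.length (Walk.take_spec q hxq)
        rwa [Walk.length_append] at this
      by_cases h2 : P.dropUntil x hxP = q.dropUntil x hxq
      · -- then the take parts differ; they are internally disjoint, giving a cycle directly
        have h1 : P.takeUntil x hxP ≠ q.takeUntil x hxq := by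
          intro h1
          apply hne
          calc P = (P.takeUntil x hxP).append (P.dropUntil x hxP) := hspec.symm
            _ = (q.takeUntil x hxq).append (q.dropUntil x hxq) := by rw [h1, h2]
            _ = q := Walk.take_spec q hxq
        have hmeet : ∀ y, y ∈ (P.takeUntil x hxP).support →
            y ∈ (q.takeUntil x hxq).support → y = u ∨ y = x := by
          intro y hyp hyq
          have hyq' : y ∈ q.support := Walk.support_takeUntil_subset q hxq hyq
          rw [hp1eq, Walk.support_cons, List.mem_cons] at hyp
          rcases hyp with rfl | hyp
          · exact Or.inl rfl
          · exact Or.inr (hmin y hyp hyq')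
        have hcyc := aux_cycle_of_disjoint (P.takeUntil x hxP) (q.takeUntil x hxq)
          (hp.takeUntil hxP) (hq.takeUntil hxq) h1 (fun h' => hxu h'.symm) hmeet
        refine ⟨u, _, hcyc, ?_⟩
        rw [Walk.length_append, Walk.length_reverse]
        have := Walk.length_takeUntil_le q hxq
        omega
      · -- recurse on the drop parts
        have hlenrec : (P.dropUntil x hxP).length + (q.dropUntil x hxq).length ≤ n := by
          omega
        obtain ⟨a, c, hc, hcl⟩ := ih (P.dropUntil x hxP) (q.dropUntil x hxq)
          (hp.dropUntil hxP) (hq.dropUntil hxq) h2 hlenrec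
        exact ⟨a, c, hc, by omega⟩

/-- The girth lower bound applied to a cycle. -/
private lemma aux_girth_le {γ : ℕ} (hgirth : (γ : ℕ∞) ≤ G.girth)
    {a : V} {c : G.Walk a a} (hc : c.IsCycle) : γ ≤ c.length := by
  have hegirth : G.egirth ≤ (c.length : ℕ∞) := by
    rw [SimpleGraph.egirth]
    exact iInf₂_le_of_le a c (iInf_le_of_le hc le_rfl)
  have hgg : γ ≤ G.girth := by exact_mod_cast hgirth
  have : G.girth ≤ c.length := by
    rw [SimpleGraph.girth]
    exact ENat.toNat_le_toNat hegirth (by simp)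
  omega

end Aux

/-- In a graph of girth at least `γ`, with `α ≥ 1` and `δ = ⌊(γ-1)/(α+1)⌋`,
every path `P` of length `δ` between `u` and `v` is the unique shortest path
between them; moreover any other path `P'` between `u` and `v` has
`|P'| > α·δ`. -/
theorem stmt_0 {V : Type*} (G : SimpleGraph V) (γ : ℕ) (hγ : 1 ≤ γ)
    (α : ℝ) (hα : 1 ≤ α)
    (hgirth : (γ : ℕ∞) ≤ G.girth)
    (δ : ℕ) (hδ : δ = ⌊((γ : ℝ) - 1) / (α + 1)⌋₊)
    (u v : V) (P : G.Walk u v) (hP : P.IsPath) (hlen : P.length = δ) :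
    (∀ P' : G.Walk u v, P'.IsPath → P' ≠ P → α * δ < (P'.length : ℝ)) ∧
      G.dist u v = δ := by
  classical
  have hα1 : (0 : ℝ) < α + 1 := by linarith
  have hγ1 : (0 : ℝ) ≤ (γ : ℝ) - 1 := by
    have : (1 : ℝ) ≤ (γ : ℝ) := by exact_mod_cast hγ
    linarith
  have hδle : (δ : ℝ) * (α + 1) ≤ (γ : ℝ) - 1 := by
    have h1 : (δ : ℝ) ≤ ((γ : ℝ) - 1) / (α + 1) := by
      rw [hδ]
      exact Nat.floor_le (by positivity)
    calc (δ : ℝ) * (α + 1) ≤ (((γ : ℝ) - 1) / (α + 1)) * (α + 1) :=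
          mul_le_mul_of_nonneg_right h1 (le_of_lt hα1)
      _ = (γ : ℝ) - 1 := div_mul_cancel₀ _ (ne_of_gt hα1)
  have key : ∀ P' : G.Walk u v, P'.IsPath → P' ≠ P → α * δ < (P'.length : ℝ) := by
    intro P' hP' hne
    obtain ⟨a, c, hc, hcl⟩ := aux_exists_cycle (P.length + P'.length) P P' hP hP'
      (Ne.symm hne) le_rfl
    have hγc : γ ≤ c.length := aux_girth_le hgirth hc
    have hγle : (γ : ℝ) ≤ (δ : ℝ) + (P'.length : ℝ) := by
      have : γ ≤ δ + P'.length := by omega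
      exact_mod_cast this
    nlinarith [hδle, hγle]
  refine ⟨key, ?_⟩
  have hle : G.dist u v ≤ δ := hlen ▸ SimpleGraph.dist_le P
  obtain ⟨Q, hQ⟩ := (P.reachable).exists_walk_length_eq_dist
  have hQb : Q.bypass.IsPath := Q.bypass_isPath
  have hQbl : Q.bypass.length ≤ δ := le_trans (Q.length_bypass_le) (by omega)
  by_cases hQP : Q.bypass = P
  · have h5 : δ ≤ Q.bypass.length := by rw [hQP, hlen]
    have h6 : δ ≤ Q.length := le_trans h5 Q.length_bypass_le
    omega
  · exfalso
    have h1 : α * δ < (Q.bypass.length : ℝ) := key Q.bypass hQb hQP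
    have h2 : (Q.bypass.length : ℝ) ≤ (δ : ℝ) := by exact_mod_cast hQbl
    have h3 : (δ : ℝ) ≤ α * δ := by nlinarith [Nat.cast_nonneg (α := ℝ) δ]
    linarith
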